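/- Let q be a prime power, k, n, d ≥ 1, and let Q ⊆ F_q^{k×n} be a code with minimum rank distance d, i.e., rank(A − B) ≥ d for all distinct A, B ∈ Q. Then {rowspace(I_k | A) : A ∈ Q} is a family of exactly |Q| distinct k-dimensional subspaces of F_q^{k+n} whose pairwise subspace distances are all at least 2d. In particular, A_q(n+k, 2d, k) ≥ |Q|. -/

import Mathlib

open Matrix

/-- The row space of a matrix: the span of its rows. -/
noncomputable def rowSpan {F : Type*} [Field F] {k c : ℕ} (M : Matrix (Fin k) (Fin c) F) :
    Submodule F (Fin c → F) :=
  Submodule.span F (Set.range M)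

/-- The subspace distance `d_S(U, W) = dim(U + W) - dim(U ∩ W)`. -/
noncomputable def sDist {F : Type*} [Field F] {N : ℕ} (U W : Submodule F (Fin N → F)) : ℕ :=
  Module.finrank F ↥(U ⊔ W) - Module.finrank F ↥(U ⊓ W)

/-- `rowspace (I_k | A)` as a subspace of `F^(k+n)`. -/
noncomputable def liftL {F : Type*} [Field F] {k n : ℕ} (A : Matrix (Fin k) (Fin n) F) :
    Submodule F (Fin (k + n) → F) :=
  rowSpan ((Matrix.fromCols (1 : Matrix (Fin k) (Fin k) F) A).submatrix id finSumFinEquiv.symm)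

/-- `A_q(N, d, k)`: the maximum size of a constant dimension code of `k`-dimensional
subspaces of `F^N` with pairwise subspace distances at least `d`. -/
noncomputable def Aq (F : Type*) [Field F] (N d k : ℕ) : ℕ :=
  sSup {M : ℕ | ∃ C : Set (Submodule F (Fin N → F)), C.Finite ∧ C.ncard = M ∧
    (∀ U ∈ C, Module.finrank F ↥U = k) ∧
    (∀ U ∈ C, ∀ W ∈ C, U ≠ W → d ≤ sDist U W)}

namespace Stmt1Aux

variable {F : Type*} [Field F] {k n : ℕ}

noncomputable def G (A : Matrix (Fin k) (Fin n) F) : Matrix (Fin k) (Fin (k + n)) F :=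
  (Matrix.fromCols (1 : Matrix (Fin k) (Fin k) F) A).submatrix id finSumFinEquiv.symm

def ι1 (k n : ℕ) (i : Fin k) : Fin (k + n) := finSumFinEquiv (Sum.inl i)
def ι2 (k n : ℕ) (j : Fin n) : Fin (k + n) := finSumFinEquiv (Sum.inr j)

lemma vecMul_G (A : Matrix (Fin k) (Fin n) F) (x : Fin k → F) :
    x ᵥ* G A = fun j => Sum.elim x (x ᵥ* A) (finSumFinEquiv.symm j) := by
  funext j
  have h1 : (x ᵥ* G A) j = (x ᵥ* Matrix.fromCols 1 A) (finSumFinEquiv.symm j) := by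
    simp [G, Matrix.vecMul, dotProduct]
  rw [h1, Matrix.vecMul_fromCols, Matrix.vecMul_one]

lemma vecMul_G_ι1 (A : Matrix (Fin k) (Fin n) F) (x : Fin k → F) (i : Fin k) :
    (x ᵥ* G A) (ι1 k n i) = x i := by
  rw [vecMul_G]; simp [ι1]

lemma vecMul_G_ι2 (A : Matrix (Fin k) (Fin n) F) (x : Fin k → F) (j : Fin n) :
    (x ᵥ* G A) (ι2 k n j) = (x ᵥ* A) j := by
  rw [vecMul_G]; simp [ι2]

lemma liftL_eq_range (A : Matrix (Fin k) (Fin n) F) :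
    liftL A = LinearMap.range (Matrix.vecMulLinear (G A)) := by
  rw [liftL, rowSpan, range_vecMulLinear]; rfl

lemma recover (A : Matrix (Fin k) (Fin n) F) (f : Fin (k + n) → F)
    (h : f ∘ ι2 k n = (f ∘ ι1 k n) ᵥ* A) : (f ∘ ι1 k n) ᵥ* G A = f := by
  funext j
  rw [vecMul_G]
  obtain ⟨s, rfl⟩ := finSumFinEquiv.surjective j
  simp only [Equiv.symm_apply_apply]
  cases s with
  | inl i => simp [ι1]
  | inr j' =>
    have := congrFun h j'
    simpa [ι2] using this.symm

lemma mem_liftL {A : Matrix (Fin k) (Fin n) F} {f : Fin (k + n) → F} :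
    f ∈ liftL A ↔ f ∘ ι2 k n = (f ∘ ι1 k n) ᵥ* A := by
  rw [liftL_eq_range]
  constructor
  · rintro ⟨x, rfl⟩
    simp only [Matrix.vecMulLinear_apply]
    funext j
    simp only [Function.comp_apply, vecMul_G_ι2]
    congr 1
    funext i
    exact (vecMul_G_ι1 A x i).symm
  · intro h
    exact ⟨f ∘ ι1 k n, recover A f h⟩

lemma vecMulLinear_G_injective (A : Matrix (Fin k) (Fin n) F) :
    Function.Injective (Matrix.vecMulLinear (G A)) := by
  rw [← LinearMap.ker_eq_bot]
  ext x
  simp only [LinearMap.mem_ker, Submodule.mem_bot, Matrix.vecMulLinear_apply]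
  constructor
  · intro h
    funext i
    have := congrFun h (ι1 k n i)
    simpa [vecMul_G_ι1] using this
  · rintro rfl; simp

lemma finrank_liftL (A : Matrix (Fin k) (Fin n) F) :
    Module.finrank F ↥(liftL A) = k := by
  rw [liftL_eq_range, LinearMap.finrank_range_of_inj (vecMulLinear_G_injective A)]
  simp

lemma liftL_injective : Function.Injective (liftL : Matrix (Fin k) (Fin n) F → _) := by
  intro A B h
  ext i j
  have hm : (Pi.single i 1 ᵥ* G A) ∈ liftL B := by
    rw [← h, liftL_eq_range]; exact ⟨_, rfl⟩
  rw [mem_liftL] at hm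
  have h2 := congrFun hm j
  have hA : (Pi.single i (1:F) ᵥ* G A) ∘ ι1 k n = Pi.single i 1 := by
    funext i'; exact vecMul_G_ι1 A _ i'
  rw [hA] at h2
  simp only [Function.comp_apply, vecMul_G_ι2] at h2
  simp only [Matrix.single_one_vecMul] at h2
  exact h2

lemma inf_liftL (A B : Matrix (Fin k) (Fin n) F) :
    liftL A ⊓ liftL B
      = Submodule.map (Matrix.vecMulLinear (G A)) (LinearMap.ker (Matrix.vecMulLinear (A - B))) := by
  ext f
  simp only [Submodule.mem_inf, Submodule.mem_map, LinearMap.mem_ker,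
    Matrix.vecMulLinear_apply]
  constructor
  · rintro ⟨hA, hB⟩
    rw [mem_liftL] at hA hB
    refine ⟨f ∘ ι1 k n, ?_, recover A f hA⟩
    rw [Matrix.vecMul_sub, ← hA, ← hB, sub_self]
  · rintro ⟨x, hx, rfl⟩
    have hxs : x ᵥ* A = x ᵥ* B := sub_eq_zero.mp (by rw [← Matrix.vecMul_sub, hx])
    constructor
    · rw [liftL_eq_range]; exact ⟨x, rfl⟩
    · rw [mem_liftL]
      funext j
      simp only [Function.comp_apply, vecMul_G_ι2]
      have hA1 : (x ᵥ* G A) ∘ ι1 k n = x := by funext i; exact vecMul_G_ι1 A x i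
      rw [hA1, hxs]

lemma finrank_range_vecMulLinear {m l : ℕ} (M : Matrix (Fin m) (Fin l) F) :
    Module.finrank F ↥(LinearMap.range M.vecMulLinear) = M.rank := by
  rw [← Matrix.mulVecLin_transpose, ← Matrix.rank_transpose M]
  rfl

lemma finrank_ker_vecMulLinear {m l : ℕ} (M : Matrix (Fin m) (Fin l) F) :
    Module.finrank F ↥(LinearMap.ker M.vecMulLinear) = m - M.rank := by
  have h := LinearMap.finrank_range_add_finrank_ker M.vecMulLinear
  rw [finrank_range_vecMulLinear] at h
  have hr : M.rank ≤ m := le_trans (Matrix.rank_le_card_height _) (by simp)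
  have hm : Module.finrank F (Fin m → F) = m := by simp
  omega

lemma sDist_liftL (A B : Matrix (Fin k) (Fin n) F) :
    sDist (liftL A) (liftL B) = 2 * (A - B).rank := by
  have hinf : Module.finrank F ↥(liftL A ⊓ liftL B) = k - (A - B).rank := by
    rw [inf_liftL,
      ← LinearEquiv.finrank_eq (Submodule.equivMapOfInjective _ (vecMulLinear_G_injective A) _)]
    exact finrank_ker_vecMulLinear _
  have hr : (A - B).rank ≤ k := le_trans (Matrix.rank_le_card_height _) (by simp)
  have hsum := Submodule.finrank_sup_add_finrank_inf_eq (liftL A) (liftL B)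
  rw [finrank_liftL, finrank_liftL, hinf] at hsum
  rw [sDist, hinf]
  omega

end Stmt1Aux

open Stmt1Aux in
theorem stmt1 (q k n d : ℕ) (hq : IsPrimePow q) (hk : 1 ≤ k) (hn : 1 ≤ n) (hd : 1 ≤ d)
    (F : Type*) [Field F] [Fintype F] (hF : Fintype.card F = q)
    (Q : Finset (Matrix (Fin k) (Fin n) F))
    (hQ : ∀ A ∈ Q, ∀ B ∈ Q, A ≠ B → d ≤ (A - B).rank) :
    Set.ncard ((fun A : Matrix (Fin k) (Fin n) F => liftL A) '' (Q : Set (Matrix (Fin k) (Fin n) F))) = Q.card ∧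
    (∀ A ∈ Q, Module.finrank F ↥(liftL A) = k) ∧
    (∀ A ∈ Q, ∀ B ∈ Q, liftL A ≠ liftL B → 2 * d ≤ sDist (liftL A) (liftL B)) ∧
    Q.card ≤ Aq F (n + k) (2 * d) k := by
  have hcard : Set.ncard ((fun A : Matrix (Fin k) (Fin n) F => liftL A) ''
      (Q : Set (Matrix (Fin k) (Fin n) F))) = Q.card := by
    rw [Set.ncard_image_of_injective _ liftL_injective, Set.ncard_coe_finset]
  have hdist : ∀ A ∈ Q, ∀ B ∈ Q, liftL A ≠ liftL B → 2 * d ≤ sDist (liftL A) (liftL B) := by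
    intro A hA B hB hne
    have hAB : A ≠ B := fun h => hne (by rw [h])
    rw [sDist_liftL]
    exact Nat.mul_le_mul_left 2 (hQ A hA B hB hAB)
  refine ⟨hcard, fun A _ => finrank_liftL A, hdist, ?_⟩
  rw [show n + k = k + n from Nat.add_comm n k, Aq]
  haveI : Finite (Submodule F (Fin (k + n) → F)) :=
    Finite.of_injective (SetLike.coe : Submodule F (Fin (k + n) → F) → Set _)
      SetLike.coe_injective
  have hbdd : BddAbove {M : ℕ | ∃ C : Set (Submodule F (Fin (k + n) → F)), C.Finite ∧
      C.ncard = M ∧ (∀ U ∈ C, Module.finrank F ↥U = k) ∧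
      (∀ U ∈ C, ∀ W ∈ C, U ≠ W → 2 * d ≤ sDist U W)} := by
    refine ⟨Nat.card (Submodule F (Fin (k + n) → F)), fun M hM => ?_⟩
    obtain ⟨C, hCfin, rfl, -, -⟩ := hM
    calc C.ncard ≤ (Set.univ : Set (Submodule F (Fin (k + n) → F))).ncard :=
          Set.ncard_le_ncard (Set.subset_univ C) Set.finite_univ
      _ = _ := Set.ncard_univ _
  refine le_csSup hbdd ?_
  refine ⟨(fun A : Matrix (Fin k) (Fin n) F => liftL A) '' (Q : Set _), Q.finite_toSet.image _,
    hcard, ?_, ?_⟩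
  · rintro U ⟨A, -, rfl⟩
    exact finrank_liftL A
  · rintro U ⟨A, hA, rfl⟩ W ⟨B, hB, rfl⟩ hne
    exact hdist A hA B hB hne
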